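/- Let Ω ⊆ ℝⁿ be an open set, let E be an open ball whose closure is contained in Ω, and let Λ > 0. There exists a constant C > 0, depending only on E, n and Λ, such that for every Lebesgue-measurable function u : ℝⁿ → ℝⁿ, every δ > 0, and every ξ ∈ ℝⁿ with |ξ| ≤ Λ and E + δξ ⊆ Ω, one has ∫_E |arctan(u(x+δξ)·ξ) − arctan(u(x)·ξ)| dx ≤ C δ (1 + F_{δ,ξ}(u, E)). -/

import Mathlib

open MeasureTheory

/-- The (real-valued) directional functional `F_{ε,ξ}(u,E)`:
`F_{ε,ξ}(u,E) = (1/ε) ∫_{E ∩ (E - εξ)} arctan(((u(x+εξ) - u(x))·ξ)²/ε) dx`. -/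
noncomputable def dirFR (n : ℕ) (ε : ℝ) (ξ : EuclideanSpace ℝ (Fin n))
    (u : EuclideanSpace ℝ (Fin n) → EuclideanSpace ℝ (Fin n))
    (E : Set (EuclideanSpace ℝ (Fin n))) : ℝ :=
  (1 / ε) *
    ∫ x in E ∩ ((fun y => y - ε • ξ) '' E),
      Real.arctan ((inner ℝ (u (x + ε • ξ) - u x) ξ : ℝ) ^ 2 / ε)


open Real


lemma half_le_arctan {s : ℝ} (h0 : 0 ≤ s) (h1 : s ≤ 1) : s / 2 ≤ Real.arctan s := by
  rcases eq_or_lt_of_le h0 with rfl | h0'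
  · simp
  have hpi := Real.pi_gt_three
  have h2 : Real.tan (s / 2) ≤ s := by
    rw [Real.tan_eq_sin_div_cos]
    have hcos : 7 / 8 < Real.cos (s / 2) := by
      have := Real.one_sub_sq_div_two_lt_cos (x := s / 2) (by positivity)
      nlinarith
    have hsin : Real.sin (s / 2) ≤ s / 2 := Real.sin_le (by linarith)
    rw [div_le_iff₀ (by linarith)]
    nlinarith
  calc s / 2 = Real.arctan (Real.tan (s / 2)) :=
        (Real.arctan_tan (by linarith) (by linarith)).symm
    _ ≤ Real.arctan s := Real.arctan_strictMono.monotone h2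

lemma arctan_lip (a b : ℝ) : |Real.arctan a - Real.arctan b| ≤ |a - b| := by
  have h : LipschitzWith 1 Real.arctan := by
    apply lipschitzWith_of_nnnorm_deriv_le Real.differentiable_arctan
    intro x
    rw [Real.deriv_arctan]
    have h1 : (0:ℝ) < 1 + x ^ 2 := by positivity
    have h2 : ‖(1:ℝ) / (1 + x ^ 2)‖ ≤ 1 := by
      rw [Real.norm_eq_abs, abs_of_pos (by positivity), div_le_one h1]
      nlinarith
    exact_mod_cast h2
  simpa [Real.dist_eq] using h.dist_le_mul a b

lemma abs_arctan_sub_le_pi (a b : ℝ) : |Real.arctan a - Real.arctan b| ≤ Real.pi := by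
  have h1 := Real.arctan_lt_pi_div_two a
  have h2 := Real.neg_pi_div_two_lt_arctan a
  have h3 := Real.arctan_lt_pi_div_two b
  have h4 := Real.neg_pi_div_two_lt_arctan b
  rw [abs_le]; constructor <;> linarith

lemma key_pointwise {a b δ : ℝ} (hδ : 0 < δ) :
    |Real.arctan a - Real.arctan b| ≤ 4 * δ + 4 * Real.arctan ((a - b) ^ 2 / δ) := by
  rcases le_or_gt ((a - b) ^ 2) δ with h | h
  · have h1 := arctan_lip a b
    have h2 : ((a - b) ^ 2 / δ) / 2 ≤ Real.arctan ((a - b) ^ 2 / δ) :=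
      half_le_arctan (by positivity) (by rw [div_le_one hδ]; exact h)
    have h3 : |a - b| * δ ≤ 2 * (a - b) ^ 2 + 4 * δ ^ 2 := by
      nlinarith [sq_nonneg (|a - b| - δ), sq_abs (a - b), abs_nonneg (a - b)]
    have h4 : |a - b| ≤ 4 * δ + 2 * ((a - b) ^ 2 / δ) := by
      rw [← sub_nonneg]
      have : 4 * δ + 2 * ((a - b) ^ 2 / δ) - |a - b|
          = (4 * δ ^ 2 + 2 * (a - b) ^ 2 - |a - b| * δ) / δ := by field_simp
      rw [this]
      apply div_nonneg _ hδ.le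
      linarith
    linarith
  · have h1 : Real.pi / 4 ≤ Real.arctan ((a - b) ^ 2 / δ) := by
      rw [← Real.arctan_one]
      exact Real.arctan_strictMono.monotone (by rw [le_div_iff₀ hδ]; linarith)
    have h2 := abs_arctan_sub_le_pi a b
    linarith

lemma pow_sub_pow_le' {a b : ℝ} (hb : 0 ≤ b) (hab : b ≤ a) (n : ℕ) :
    a ^ n - b ^ n ≤ n * a ^ (n - 1) * (a - b) := by
  induction n with
  | zero => simp
  | succ m ih =>
    have ha : 0 ≤ a := hb.trans hab
    have hpow : b ^ m ≤ a ^ m := pow_le_pow_left₀ hb hab m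
    rcases Nat.eq_zero_or_pos m with rfl | hm
    · norm_num
    · have hams : a ^ (m - 1) * a = a ^ m := by
        rw [← pow_succ, Nat.sub_add_cancel hm]
      have key : a ^ (m + 1) - b ^ (m + 1) = a * (a ^ m - b ^ m) + (a - b) * b ^ m := by ring
      have h2 : a * (a ^ m - b ^ m) ≤ a * ((m : ℝ) * a ^ (m - 1) * (a - b)) :=
        mul_le_mul_of_nonneg_left ih ha
      have h3 : a * ((m : ℝ) * a ^ (m - 1) * (a - b)) = (m : ℝ) * a ^ m * (a - b) := by
        rw [← hams]; ring
      have h4 : (a - b) * b ^ m ≤ (a - b) * a ^ m :=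
        mul_le_mul_of_nonneg_left hpow (by linarith)
      have h6 : ((m : ℝ) + 1) * a ^ m * (a - b)
          = (m : ℝ) * a ^ m * (a - b) + (a - b) * a ^ m := by ring
      have goal_eq : ((m + 1 : ℕ) : ℝ) * a ^ (m + 1 - 1) * (a - b)
          = ((m : ℝ) + 1) * a ^ m * (a - b) := by push_cast; ring_nf
      rw [key, goal_eq, h6]
      linarith [h2.trans_eq h3]

set_option maxHeartbeats 1000000 in
/-- Lemma 4.4 (Gobbino's Lemma 5.1), for a ball `E` with closure contained in `Ω` and
directions `ξ` confined to `{|ξ| ≤ Λ}`: there is `C > 0`, depending only on `E`, `n`, `Λ`,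
such that for every measurable `u`, `δ > 0` and `ξ` with `|ξ| ≤ Λ` and `E + δξ ⊆ Ω`,
`∫_E |arctan(u(x+δξ)·ξ) - arctan(u(x)·ξ)| dx ≤ Cδ(1 + F_{δ,ξ}(u,E))`. -/
theorem stmt5 (n : ℕ) (Ω : Set (EuclideanSpace ℝ (Fin n))) (hΩ : IsOpen Ω)
    (x₀ : EuclideanSpace ℝ (Fin n)) (r : ℝ) (hr : 0 < r)
    (hcl : closure (Metric.ball x₀ r) ⊆ Ω) (Λ : ℝ) (hΛ : 0 < Λ) :
    ∃ C : ℝ, 0 < C ∧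
      ∀ u : EuclideanSpace ℝ (Fin n) → EuclideanSpace ℝ (Fin n), Measurable u →
      ∀ δ : ℝ, 0 < δ → ∀ ξ : EuclideanSpace ℝ (Fin n), ‖ξ‖ ≤ Λ →
        (fun y => y + δ • ξ) '' Metric.ball x₀ r ⊆ Ω →
        (∫ x in Metric.ball x₀ r,
            |Real.arctan (inner ℝ (u (x + δ • ξ)) ξ : ℝ) -
              Real.arctan (inner ℝ (u x) ξ : ℝ)|)
          ≤ C * δ * (1 + dirFR n δ ξ u (Metric.ball x₀ r)) := by
  classical
  set E : Set (EuclideanSpace ℝ (Fin n)) := Metric.ball x₀ r with hE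
  set B : ℝ := (volume (Metric.ball (0 : EuclideanSpace ℝ (Fin n)) 1)).toReal with hB
  set V : ℝ := (volume E).toReal with hVdef
  have hB0 : 0 ≤ B := ENNReal.toReal_nonneg
  have hV0 : 0 ≤ V := ENNReal.toReal_nonneg
  have hrn1 : (0:ℝ) ≤ r ^ (n - 1) := by positivity
  set K : ℝ := 2 * Real.pi * (n * r ^ (n - 1) * Λ * B) with hKdef
  have hK0 : 0 ≤ K := by
    have hpi := Real.pi_pos.le
    have hn0 : (0:ℝ) ≤ (n:ℝ) := Nat.cast_nonneg n
    positivity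
  refine ⟨4 * V + K + 4, by linarith, ?_⟩
  intro u hu δ hδ ξ hξ _
  set v : EuclideanSpace ℝ (Fin n) := δ • ξ with hv
  set S : Set (EuclideanSpace ℝ (Fin n)) := (fun y => y - v) '' E with hSdef
  have hSball : S = Metric.ball (x₀ - v) r := by
    ext z
    simp only [hSdef, Set.mem_image, hE, Metric.mem_ball]
    constructor
    · rintro ⟨y, hy, rfl⟩
      rwa [dist_sub_right]
    · intro hz
      refine ⟨z + v, ?_, by abel⟩
      have : dist (z + v) x₀ = dist z (x₀ - v) := by
        rw [dist_eq_norm, dist_eq_norm]; congr 1; abel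
      rwa [this]
  have hSmeas : MeasurableSet S := hSball ▸ measurableSet_ball
  have hnv : ‖v‖ ≤ δ * Λ := by
    rw [hv, norm_smul, Real.norm_eq_abs, abs_of_pos hδ]
    exact mul_le_mul_of_nonneg_left hξ hδ.le
  set g : EuclideanSpace ℝ (Fin n) → ℝ :=
    fun x => Real.arctan ((inner ℝ (u (x + v) - u x) ξ : ℝ) ^ 2 / δ) with hgdef
  set f : EuclideanSpace ℝ (Fin n) → ℝ :=
    fun x => |Real.arctan (inner ℝ (u (x + v)) ξ : ℝ) - Real.arctan (inner ℝ (u x) ξ : ℝ)|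
    with hfdef
  have hg_meas : Measurable g := by
    apply Real.continuous_arctan.measurable.comp
    apply Measurable.div_const
    apply Measurable.pow_const
    exact ((hu.comp (measurable_add_const v)).sub hu).inner measurable_const
  have hf_meas : Measurable f := by
    apply Measurable.abs
    apply Measurable.sub
    · exact Real.continuous_arctan.measurable.comp
        ((hu.comp (measurable_add_const v)).inner measurable_const)
    · exact Real.continuous_arctan.measurable.comp (hu.inner measurable_const)
  have hEfin : volume E < ⊤ := measure_ball_lt_top
  haveI : IsFiniteMeasure (volume.restrict E) :=
    ⟨by rw [Measure.restrict_apply_univ]; exact hEfin⟩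
  have hg_bound : ∀ x, ‖g x‖ ≤ Real.pi / 2 := by
    intro x
    rw [Real.norm_eq_abs, abs_le]
    exact ⟨(Real.neg_pi_div_two_lt_arctan _).le, (Real.arctan_lt_pi_div_two _).le⟩
  have hg_int : IntegrableOn g E := by
    exact Integrable.mono' (integrable_const (Real.pi / 2))
      hg_meas.aestronglyMeasurable (Filter.Eventually.of_forall hg_bound)
  have hf_int : IntegrableOn f E := by
    refine Integrable.mono' (integrable_const Real.pi)
      hf_meas.aestronglyMeasurable (Filter.Eventually.of_forall fun x => ?_)
    rw [Real.norm_eq_abs, hfdef, abs_abs]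
    exact abs_arctan_sub_le_pi _ _
  have hg_nonneg : ∀ x, 0 ≤ g x := by
    intro x
    rw [hgdef, ← Real.arctan_zero]
    exact Real.arctan_strictMono.monotone (by positivity)
  -- dirFR identity
  have hFeq : δ * dirFR n δ ξ u E = ∫ x in E ∩ S, g x := by
    rw [dirFR, ← mul_assoc, mul_one_div, div_self hδ.ne', one_mul]
  have hF : 0 ≤ dirFR n δ ξ u E := by
    have h1 : 0 ≤ ∫ x in E ∩ S, g x :=
      setIntegral_nonneg (measurableSet_ball.inter hSmeas) fun x _ => hg_nonneg x
    have h2 : 0 ≤ δ * dirFR n δ ξ u E := hFeq ▸ h1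
    nlinarith
  -- volume bound
  have hvol : (volume (E \ S)).toReal ≤ n * r ^ (n - 1) * Λ * B * δ := by
    rcases Nat.eq_zero_or_pos n with hn | hn
    · have : E \ S = ∅ := by
        subst hn
        have : ∀ z : EuclideanSpace ℝ (Fin 0), z ∈ S := by
          intro z
          rw [hSball, Metric.mem_ball, Subsingleton.elim z (x₀ - v), dist_self]
          exact hr
        exact Set.diff_eq_empty.mpr fun z _ => this z
      rw [this]
      simp only [measure_empty, ENNReal.toReal_zero]
      positivity
    · haveI : Nontrivial (EuclideanSpace ℝ (Fin n)) :=
        Module.nontrivial_of_finrank_pos (R := ℝ) (by rw [finrank_euclideanSpace_fin]; omega)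
      set t : ℝ := min (δ * Λ) r with htdef
      have ht0 : 0 ≤ t := le_min (by positivity) hr.le
      have htr : t ≤ r := min_le_right _ _
      have hball_sub : Metric.ball x₀ (r - t) ⊆ S := by
        intro x hx
        have hd : dist x x₀ < r - t := Metric.mem_ball.mp hx
        have htlt : t < r := by
          have := dist_nonneg (x := x) (y := x₀); linarith
        have hdl : δ * Λ ≤ r := by
          by_contra h
          push_neg at h
          have : t = r := min_eq_right h.le
          linarith
        have ht_eq : t = δ * Λ := min_eq_left hdl
        rw [hSball, Metric.mem_ball]
        have h1 : dist x (x₀ - v) ≤ dist x x₀ + dist x₀ (x₀ - v) := dist_triangle _ _ _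
        have h2 : dist x₀ (x₀ - v) = ‖v‖ := by
          rw [dist_eq_norm]; congr 1; abel
        rw [ht_eq] at hd
        linarith [hnv, h1, h2 ▸ h1]
      have h1 : volume (E \ S) ≤ volume (E \ Metric.ball x₀ (r - t)) :=
        measure_mono (Set.diff_subset_diff_right hball_sub)
      have h2 : volume (E \ Metric.ball x₀ (r - t))
          = volume E - volume (Metric.ball x₀ (r - t)) := by
        refine measure_diff (Metric.ball_subset_ball (by linarith))
          measurableSet_ball.nullMeasurableSet measure_ball_lt_top.ne
      have h3 : volume E
          = ENNReal.ofReal (r ^ n) * volume (Metric.ball (0 : EuclideanSpace ℝ (Fin n)) 1) := by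
        have h := Measure.addHaar_ball (μ := volume) x₀ hr.le
        rwa [finrank_euclideanSpace_fin] at h
      have h4 : volume (Metric.ball x₀ (r - t))
          = ENNReal.ofReal ((r - t) ^ n)
            * volume (Metric.ball (0 : EuclideanSpace ℝ (Fin n)) 1) := by
        have h := Measure.addHaar_ball (μ := volume) x₀ (show (0:ℝ) ≤ r - t by linarith)
        rwa [finrank_euclideanSpace_fin] at h
      have hpowle : (r - t) ^ n ≤ r ^ n := pow_le_pow_left₀ (by linarith) (by linarith) n
      have h5 : volume (E \ Metric.ball x₀ (r - t))
          = ENNReal.ofReal (r ^ n - (r - t) ^ n)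
            * volume (Metric.ball (0 : EuclideanSpace ℝ (Fin n)) 1) := by
        rw [h2, h3, h4, ← ENNReal.sub_mul (fun _ _ => measure_ball_lt_top.ne),
          ENNReal.ofReal_sub _ (pow_nonneg (by linarith) n)]
      have hfin : ENNReal.ofReal (r ^ n - (r - t) ^ n)
          * volume (Metric.ball (0 : EuclideanSpace ℝ (Fin n)) 1) ≠ ⊤ :=
        ENNReal.mul_ne_top ENNReal.ofReal_ne_top measure_ball_lt_top.ne
      have h6 : (volume (E \ S)).toReal ≤ (r ^ n - (r - t) ^ n) * B := by
        have := ENNReal.toReal_mono hfin (h1.trans_eq h5)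
        rwa [ENNReal.toReal_mul, ENNReal.toReal_ofReal (by linarith)] at this
      have h7 : r ^ n - (r - t) ^ n ≤ n * r ^ (n - 1) * t :=
        (pow_sub_pow_le' (by linarith) (by linarith) n).trans_eq (by ring_nf)
      have h8 : t ≤ δ * Λ := min_le_left _ _
      have hn0 : (0:ℝ) ≤ (n:ℝ) := Nat.cast_nonneg n
      calc (volume (E \ S)).toReal ≤ (r ^ n - (r - t) ^ n) * B := h6
        _ ≤ (n * r ^ (n - 1) * t) * B :=
            mul_le_mul_of_nonneg_right h7 hB0
        _ ≤ (n * r ^ (n - 1) * (δ * Λ)) * B := by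
            apply mul_le_mul_of_nonneg_right _ hB0
            exact mul_le_mul_of_nonneg_left h8 (by positivity)
        _ = n * r ^ (n - 1) * Λ * B * δ := by ring
  -- main chain
  have step1 : ∫ x in E, f x ≤ ∫ x in E, (4 * δ + 4 * g x) := by
    refine setIntegral_mono_on hf_int
      ((integrable_const _).add (hg_int.const_mul 4)) measurableSet_ball fun x _ => ?_
    have := key_pointwise (a := (inner ℝ (u (x + v)) ξ : ℝ)) (b := (inner ℝ (u x) ξ : ℝ)) hδ
    rwa [← inner_sub_left] at this
  have step2 : ∫ x in E, (4 * δ + 4 * g x) = 4 * δ * V + 4 * ∫ x in E, g x := by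
    rw [integral_add (integrable_const _) (hg_int.const_mul 4), setIntegral_const,
      integral_const_mul, smul_eq_mul]
    rw [hVdef, Measure.real]
    ring
  have step3 : ∫ x in E, g x = (∫ x in E ∩ S, g x) + ∫ x in E \ S, g x :=
    (integral_inter_add_diff hSmeas hg_int).symm
  have step4 : ∫ x in E \ S, g x ≤ (Real.pi / 2) * (volume (E \ S)).toReal := by
    have h1 : ‖∫ x in E \ S, g x‖ ≤ (Real.pi / 2) * (volume (E \ S)).toReal :=
      norm_setIntegral_le_of_norm_le_const
        (lt_of_le_of_lt (measure_mono Set.diff_subset) hEfin)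
        (fun x _ => hg_bound x)
    calc ∫ x in E \ S, g x ≤ ‖∫ x in E \ S, g x‖ := le_abs_self _
      _ ≤ _ := h1
  have step5 : (Real.pi / 2) * (volume (E \ S)).toReal ≤ K / 4 * δ := by
    rw [hKdef]
    have := mul_le_mul_of_nonneg_left hvol (by positivity : (0:ℝ) ≤ Real.pi / 2)
    calc (Real.pi / 2) * (volume (E \ S)).toReal
        ≤ Real.pi / 2 * (n * r ^ (n - 1) * Λ * B * δ) := this
      _ = 2 * Real.pi * (n * r ^ (n - 1) * Λ * B) / 4 * δ := by ring
  have hFF : ∫ x in E ∩ S, g x = δ * dirFR n δ ξ u E := hFeq.symm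
  set F : ℝ := dirFR n δ ξ u E with hFdef2
  have final : ∫ x in E, f x ≤ 4 * δ * V + 4 * δ * F + K * δ := by
    rw [hFF] at step3
    calc ∫ x in E, f x ≤ 4 * δ * V + 4 * (δ * F + ∫ x in E \ S, g x) := by
          rw [step2] at step1; rw [step3] at step1; linarith
      _ ≤ 4 * δ * V + 4 * (δ * F + K / 4 * δ) := by
          have := step4.trans step5; linarith
      _ = 4 * δ * V + 4 * δ * F + K * δ := by ring
  have hpos : 0 ≤ (4 * V + K) * (δ * F) :=
    mul_nonneg (by linarith) (mul_nonneg hδ.le hF)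
  calc ∫ x in E, f x ≤ 4 * δ * V + 4 * δ * F + K * δ := final
    _ ≤ (4 * V + K + 4) * δ * (1 + F) := by nlinarith
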